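/- Let n ≥ 2 and let Λ be the symbol of the bipartition 2^{n−1}.∅ with charge σ₁ = (−2,1). Consider the set of block symbols: the symbols of charge σ₀ of the bipartitions in PS(n), the symbols of charge σ₁ of the bipartitions in L_{B₂}(n), and the symbols of charge σ₂ of the bipartitions in L_{B₆}(n). Among these, the symbols Λ' satisfying Λ' ⊲ Λ are exactly the three symbols of charge σ₀ of the bipartitions 1^{2n}.∅, ∅.21^{2n−2} and ∅.1^{2n}. -/

import Mathlib

open scoped Classical

noncomputable section

/-- A partition: an antitone, eventually zero sequence of natural numbers.
`parts k` is the `(k+1)`-st part `λ_{k+1}`. -/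
structure Partition' where
  parts : ℕ → ℕ
  antitone' : Antitone parts
  exists_zero : ∃ N, parts N = 0

namespace Partition'

lemma sorted_getD_antitone {l : List ℕ} (h : l.Pairwise (· ≥ ·)) :
    Antitone (fun k => l.getD k 0) := by
  intro i j hij
  simp only
  rcases lt_or_ge j l.length with hj | hj
  · have hi : i < l.length := lt_of_le_of_lt hij hj
    rw [List.getD_eq_getElem l 0 hj, List.getD_eq_getElem l 0 hi]
    rcases eq_or_lt_of_le hij with rfl | hlt
    · exact le_rfl
    · exact List.pairwise_iff_getElem.mp h i j hi hj hlt
  · rw [List.getD_eq_default l 0 hj]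
    exact Nat.zero_le _

/-- The partition whose multiset of (nonzero) parts is the multiset of nonzero
elements of `m`. -/
def ofMul (m : Multiset ℕ) : Partition' where
  parts := fun k => ((m.sort (· ≤ ·)).reverse).getD k 0
  antitone' := by
    apply sorted_getD_antitone
    rw [List.pairwise_reverse]
    exact Multiset.pairwise_sort ..
  exists_zero := ⟨((m.sort (· ≤ ·)).reverse).length, List.getD_eq_default _ _ le_rfl⟩

/-- The size `|λ|` of a partition: the sum of its parts. -/
def size (p : Partition') : ℕ := ∑ i ∈ Finset.range (Nat.find p.exists_zero), p.parts i

lemma finite_gt (p : Partition') (k : ℕ) : {i : ℕ | k < p.parts i}.Finite := by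
  obtain ⟨N, hN⟩ := p.exists_zero
  apply (Set.finite_Iio N).subset
  intro i hi
  simp only [Set.mem_setOf_eq] at hi
  by_contra hc
  simp only [Set.mem_Iio, not_lt] at hc
  have := p.antitone' hc
  omega

/-- The conjugate (transpose) partition. -/
def conj (p : Partition') : Partition' where
  parts := fun k => {i : ℕ | k < p.parts i}.ncard
  antitone' := fun a b hab =>
    Set.ncard_le_ncard (fun i hi => lt_of_le_of_lt hab hi) (p.finite_gt a)
  exists_zero := by
    refine ⟨p.parts 0, ?_⟩
    have h : {i : ℕ | p.parts 0 < p.parts i} = ∅ := by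
      ext i
      simp only [Set.mem_setOf_eq, Set.mem_empty_iff_false, iff_false, not_lt]
      exact p.antitone' (Nat.zero_le i)
    show {i : ℕ | p.parts 0 < p.parts i}.ncard = 0
    rw [h, Set.ncard_empty]

/-- The 180°-rotation of the complement of `p` inside the rectangle with
`rows` rows of length `c`: the partition `(c - p_rows, c - p_{rows-1}, …, c - p₁)`. -/
def rotCompl (c rows : ℕ) (p : Partition') : Partition' where
  parts := fun k => if k < rows then c - p.parts (rows - 1 - k) else 0
  antitone' := by
    intro a b hab
    by_cases hb : b < rows
    · have ha : a < rows := lt_of_le_of_lt hab hb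
      simp only [if_pos hb, if_pos ha]
      exact Nat.sub_le_sub_left (p.antitone' (by omega)) c
    · simp only [if_neg hb]
      exact Nat.zero_le _
  exists_zero := ⟨rows, by simp⟩

end Partition'

/-- A bipartition: a pair of partitions. -/
abbrev Bipartition := Partition' × Partition'

/-- The size of a bipartition. -/
def Bipartition.size (l : Bipartition) : ℕ := l.1.size + l.2.size

/-- The bipartition whose components have parts the multisets `a` and `b`. -/
def bip (a b : Multiset ℕ) : Bipartition := (Partition'.ofMul a, Partition'.ofMul b)

/-- The multiset of parts of the partition `a 1^b` (one part `a`, then `b` parts `1`). -/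
def hook (a b : ℕ) : Multiset ℕ := a ::ₘ Multiset.replicate b 1

/-- The charged β-set of a partition, as a sequence:
`betaSet p s i = λ_{i+1} + s - (i+1) + 1`. -/
def betaSet (p : Partition') (s : ℤ) (i : ℕ) : ℤ := (p.parts i : ℤ) + s - i

/-- The charged symbol of a bipartition with charge `σ`, as a pair of subsets of `ℤ`. -/
def symbolOf (l : Bipartition) (σ : ℤ × ℤ) : Set ℤ × Set ℤ :=
  (Set.range (betaSet l.1 σ.1), Set.range (betaSet l.2 σ.2))

/-- The charge `σ_t`. -/
def sigmaT (t : ℕ) : ℤ × ℤ :=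
  if Even t then ((t : ℤ), -1 - (t : ℤ)) else (-1 - (t : ℤ), (t : ℤ))

/-- The trivial symbol `({0,-1,-2,…},{-1,-2,-3,…})`, the symbol of the empty
bipartition with charge `σ₀ = (0,-1)`. -/
def trivialSymbol : Set ℤ × Set ℤ := ({z : ℤ | z ≤ 0}, {z : ℤ | z ≤ -1})

/-- Removing one `n`-co-hook from the symbol `Λ`, yielding `Λ'`: remove `x+n` from one
row, adjoin `x` to the other row, and exchange the two rows. -/
def CohookStep (n : ℕ) (Λ Λ' : Set ℤ × Set ℤ) : Prop :=
  (∃ x : ℤ, x + n ∈ Λ.1 ∧ x ∉ Λ.2 ∧ Λ' = (Λ.2 ∪ {x}, Λ.1 \ {x + n})) ∨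
  (∃ x : ℤ, x + n ∈ Λ.2 ∧ x ∉ Λ.1 ∧ Λ' = (Λ.2 \ {x + n}, Λ.1 ∪ {x}))

/-- `C` is the `n`-co-core of `Λ`: it is obtained from `Λ` by recursively removing
`n`-co-hooks, and no further `n`-co-hook can be removed. -/
def IsCocore (n : ℕ) (Λ C : Set ℤ × Set ℤ) : Prop :=
  Relation.ReflTransGen (CohookStep n) Λ C ∧ ∀ C', ¬ CohookStep n C C'

/-- Number of entries of the charged β-set of `p` that are `≥ α` (with multiplicity). -/
def betaCountGE (p : Partition') (s α : ℤ) : ℕ := Nat.card {i : ℕ // α ≤ betaSet p s i}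

/-- Number of entries `≥ α`, with multiplicity, of the multiset union of the two rows
of the symbol of `l` with charge `σ`. -/
def symCountGE (l : Bipartition) (σ : ℤ × ℤ) (α : ℤ) : ℕ :=
  betaCountGE l.1 σ.1 α + betaCountGE l.2 σ.2 α

/-- The composition `ϖ_Λ` of the symbol of `l` with charge `σ`: `comp l σ k` is the
`(k+1)`-st largest entry (with multiplicity) of the multiset union of the two rows. -/
def comp (l : Bipartition) (σ : ℤ × ℤ) (k : ℕ) : ℤ :=
  sSup {z : ℤ | k + 1 ≤ symCountGE l σ z}

/-- All partial sums of the composition of the symbol `(l,σ)` are bounded by those of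
`(m,τ)`. -/
def DomLE (l : Bipartition) (σ : ℤ × ℤ) (m : Bipartition) (τ : ℤ × ℤ) : Prop :=
  ∀ j : ℕ, ∑ k ∈ Finset.range j, comp l σ k ≤ ∑ k ∈ Finset.range j, comp m τ k

/-- Strict dominance `Λ ⊲ Λ'` of symbols: the compositions differ and all partial sums
of the first are bounded by those of the second. -/
def DomLT (l : Bipartition) (σ : ℤ × ℤ) (m : Bipartition) (τ : ℤ × ℤ) : Prop :=
  comp l σ ≠ comp m τ ∧ DomLE l σ m τ

/-- A box `(x, y, j)` (0-indexed row `x`, 0-indexed column `y`, component `j`: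
`j = 0` is the first component, `j = 1` the second). -/
abbrev Box := ℕ × ℕ × Fin 2

/-- The component of a bipartition selected by `j : Fin 2`. -/
def Bipartition.partsOf (l : Bipartition) (j : Fin 2) : Partition' := if j = 0 then l.1 else l.2

/-- Membership of a box in the Young diagram of a bipartition. -/
def MemY (l : Bipartition) (b : Box) : Prop := b.2.1 < (l.partsOf b.2.2).parts b.1

/-- The entry of the charge `σ` corresponding to component `j`. -/
def chargeOf (σ : ℤ × ℤ) (j : Fin 2) : ℤ := if j = 0 then σ.1 else σ.2

/-- The charged content `co^σ(b) = y - x + σ_j` of a box. -/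
def content (σ : ℤ × ℤ) (b : Box) : ℤ := (b.2.1 : ℤ) - (b.1 : ℤ) + chargeOf σ b.2.2

/-- `j(b) ∈ {1,2}`: the component of a box, numbered 1 or 2. -/
def jval (b : Box) : ℕ := (b.2.2 : ℕ) + 1

/-- The counting function of the Dunkl–Griffeth order. -/
def dgCount (l : Bipartition) (s : ℤ × ℤ) (d : ℕ) (α : ℝ) (j : ℕ) : ℕ :=
  Nat.card {b : Box // MemY l b ∧
    (α < (content s b : ℝ) - (jval b : ℝ) * (d : ℝ) / 2 ∨
      ((content s b : ℝ) - (jval b : ℝ) * (d : ℝ) / 2 = α ∧ jval b ≤ j))}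

/-- The Dunkl–Griffeth order `λ ⪯_s μ` (with respect to `d`). -/
def DGLE (l m : Bipartition) (s : ℤ × ℤ) (d : ℕ) : Prop :=
  ∀ (α : ℝ), ∀ j ∈ ({1, 2} : Set ℕ), dgCount l s d α j ≤ dgCount m s d α j

/-- A box of the extended Young diagram: rows are infinite to the left, so the column
coordinate is an integer.  `(x, y, j)` is the box in (0-indexed) row `x`, with integer
column coordinate `y` (`y = 0` is the first column), in component `j`. -/
abbrev ExtBox := ℕ × ℤ × Fin 2

/-- Membership in the extended Young diagram of a bipartition. -/
def MemExtY (l : Bipartition) (b : ExtBox) : Prop :=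
  b.2.1 < ((l.partsOf b.2.2).parts b.1 : ℤ)

/-- The charged content of an extended box. -/
def contentExt (σ : ℤ × ℤ) (b : ExtBox) : ℤ := b.2.1 - (b.1 : ℤ) + chargeOf σ b.2.2

/-- `b` is a removable box of the bipartition `l`. -/
def Removable (l : Bipartition) (b : Box) : Prop :=
  (l.partsOf b.2.2).parts b.1 = b.2.1 + 1 ∧ (l.partsOf b.2.2).parts (b.1 + 1) ≤ b.2.1

/-- `b` is an addable box of the bipartition `l`. -/
def Addable (l : Bipartition) (b : Box) : Prop :=
  (l.partsOf b.2.2).parts b.1 = b.2.1 ∧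
    (b.1 = 0 ∨ b.2.1 + 1 ≤ (l.partsOf b.2.2).parts (b.1 - 1))

/-- The order in which boxes are listed in the `i`-word: increasing charged content,
a component-2 box preceding a component-1 box of equal charged content. -/
def BoxLT (σ : ℤ × ℤ) (b b' : Box) : Prop :=
  content σ b < content σ b' ∨
    (content σ b = content σ b' ∧ b.2.2 = 1 ∧ b'.2.2 = 0)

/-- `L` is the list of boxes underlying the `i`-word of `(l, σ)` with respect to `d`:
it lists, in increasing order, exactly the addable and removable boxes of `l` whose
charged content is congruent to `i` modulo `d`. -/
def IsIWord (l : Bipartition) (σ : ℤ × ℤ) (d : ℕ) (i : ZMod d) (L : List Box) : Prop :=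
  L.Pairwise (BoxLT σ) ∧
    ∀ b : Box, b ∈ L ↔ ((Addable l b ∨ Removable l b) ∧ ((content σ b : ZMod d) = i))

/-- The sign of a box in the `i`-word: `true` (`+`) for addable, `false` (`−`) for
removable boxes. -/
def signOf (l : Bipartition) (b : Box) : Bool := if Addable l b then true else false

/-- One reduction step on words: delete an adjacent pair `−+`. -/
def RedStep (w w' : List Bool) : Prop :=
  ∃ u v : List Bool, w = u ++ false :: true :: v ∧ w' = u ++ v

/-- `ẽ_i l = 0`: the reduced `i`-word of `(l, σ)` contains no `−`, i.e. the `i`-word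
reduces to a word consisting only of `+`'s. -/
def AnnihilatedE (l : Bipartition) (σ : ℤ × ℤ) (d : ℕ) (i : ZMod d) : Prop :=
  ∃ L : List Box, IsIWord l σ d i L ∧
    ∃ a : ℕ, Relation.ReflTransGen RedStep (L.map (signOf l)) (List.replicate a true)

/-- `q` is obtained from the partition `p` by adding one box. -/
def PCovers (p q : Partition') : Prop :=
  ∃ x : ℕ, q.parts x = p.parts x + 1 ∧ ∀ y : ℕ, y ≠ x → q.parts y = p.parts y

/-- `m` is obtained from the bipartition `l` by adding one box to its Young diagram. -/
def BipCovers (l m : Bipartition) : Prop :=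
  (PCovers l.1 m.1 ∧ m.2 = l.2) ∨ (m.1 = l.1 ∧ PCovers l.2 m.2)

/-- `A(l) = Σ_μ μ`, the sum over all bipartitions obtained from `l` by adding one box,
as an element of the group of `ℤ`-valued functions on bipartitions. -/
def addB (l : Bipartition) : Bipartition → ℤ := fun m => if BipCovers l m then 1 else 0

/-- The projection `π_S` onto the span of the bipartitions lying in `S`. -/
def projS (S : Set Bipartition) (f : Bipartition → ℤ) : Bipartition → ℤ :=
  fun m => if m ∈ S then f m else 0

/-- The basis element of `ℤ[BP]` corresponding to a bipartition. -/
def deltaB (l : Bipartition) : Bipartition → ℤ := fun m => if m = l then 1 else 0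

/-- The bipartitions of `2n` labelling the principal-series unipotent characters in
the principal `Φ_{2n}`-block. -/
def PS (n : ℕ) : Set Bipartition :=
  {l | (∃ i j : ℕ, 0 < i ∧ i < n ∧ j ≤ n ∧
          l = bip (hook (n - i) j) (hook (n - j + 1) (i - 1))) ∨
       (∃ j : ℕ, j < 2 * n ∧ l = bip (hook (2 * n - j) j) 0) ∨
       (∃ i : ℕ, 0 < i ∧ i ≤ 2 * n ∧ l = bip 0 (hook (2 * n - i + 1) (i - 1)))}

/-- The bipartitions of `2n-2` labelling the `B₂`-series unipotent characters in the
principal `Φ_{2n}`-block: `2^i 1^{j-i-1} . (n-i-1)(n-j)` for `0 ≤ i < j ≤ n`. -/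
def LB2 (n : ℕ) : Set Bipartition :=
  {l | ∃ i j : ℕ, i < j ∧ j ≤ n ∧
        l = bip (Multiset.replicate i 2 + Multiset.replicate (j - i - 1) 1)
                {n - i - 1, n - j}}

/-- The bipartitions of `2n-6` labelling the `B₆`-series unipotent characters in the
principal `Φ_{2n}`-block: `(n-i-2)(n-j-1) . 2^{i-1} 1^{j-i-1}` for `0 < i < j < n`. -/
def LB6 (n : ℕ) : Set Bipartition :=
  {l | ∃ i j : ℕ, 0 < i ∧ i < j ∧ j < n ∧
        l = bip {n - i - 2, n - j - 1}
                (Multiset.replicate (i - 1) 2 + Multiset.replicate (j - i - 1) 1)}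

end


noncomputable section Aux19

namespace Aux19

lemma Partition'.ext' {p q : Partition'} (h : p.parts = q.parts) : p = q := by
  cases p; cases q; cases h; rfl

lemma parts_ofMul_coe (L : List ℕ) (h : L.Pairwise (· ≥ ·)) (k : ℕ) :
    (Partition'.ofMul (↑L : Multiset ℕ)).parts k = L.getD k 0 := by
  have hrev : ((↑L : Multiset ℕ).sort (· ≤ ·)) = L.reverse :=
    List.Perm.eq_of_pairwise'
      (Multiset.pairwise_sort _ _)
      (by rw [List.pairwise_reverse]; exact h)
      ((Multiset.coe_eq_coe.mp (Multiset.sort_eq (↑L : Multiset ℕ) (· ≤ ·))).trans (List.reverse_perm L).symm)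
  simp [Partition'.ofMul, hrev]

lemma sorted_replicate (c v : ℕ) : (List.replicate c v).Pairwise (· ≥ ·) :=
  List.pairwise_replicate.mpr (Or.inr le_rfl)

lemma getD_replicate (c v k : ℕ) :
    (List.replicate c v).getD k 0 = if k < c then v else 0 := by
  split_ifs with h
  · rw [List.getD_eq_getElem _ _ (by simpa using h)]
    simp
  · rw [List.getD_eq_default]
    simpa using not_lt.mp h

lemma parts_replicate (c v k : ℕ) :
    (Partition'.ofMul (Multiset.replicate c v)).parts k = if k < c then v else 0 := by
  rw [← Multiset.coe_replicate, parts_ofMul_coe _ (sorted_replicate c v), getD_replicate]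

lemma parts_zero (k : ℕ) : (Partition'.ofMul 0).parts k = 0 := by
  have := parts_replicate 0 0 k
  simpa using this

lemma hook_coe (a b : ℕ) : hook a b = (↑(a :: List.replicate b 1) : Multiset ℕ) := by
  simp [hook, ← Multiset.coe_replicate]

lemma parts_hook (a b : ℕ) (ha : 1 ≤ a) (k : ℕ) :
    (Partition'.ofMul (hook a b)).parts k =
      if k = 0 then a else if k ≤ b then 1 else 0 := by
  rw [hook_coe, parts_ofMul_coe]
  · cases k with
    | zero => simp
    | succ k =>
      simp only [List.getD_cons_succ, getD_replicate]
      split_ifs <;> simp_all <;> omega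
  · rw [List.pairwise_cons]
    exact ⟨fun b hb => by simp at hb; omega, sorted_replicate _ _⟩

lemma pair_coe (a b : ℕ) : ({a, b} : Multiset ℕ) = (↑[a, b] : Multiset ℕ) := rfl

lemma parts_pair (a b : ℕ) (hab : b ≤ a) (k : ℕ) :
    (Partition'.ofMul ({a, b} : Multiset ℕ)).parts k =
      if k = 0 then a else if k = 1 then b else 0 := by
  rw [pair_coe, parts_ofMul_coe]
  · match k with
    | 0 => simp
    | 1 => simp
    | (k+2) => simp [List.getD]
  · simp [hab]

lemma betaSet_antitone (p : Partition') (s : ℤ) : Antitone (betaSet p s) := by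
  intro i j hij
  simp only [betaSet]
  have := p.antitone' hij
  omega

lemma betaSet_le (p : Partition') (s : ℤ) (i : ℕ) :
    betaSet p s i ≤ betaSet p s 0 := betaSet_antitone p s (Nat.zero_le i)

lemma setGE_finite (p : Partition') (s α : ℤ) : {i : ℕ | α ≤ betaSet p s i}.Finite := by
  obtain ⟨N, hN⟩ := p.exists_zero
  apply (Set.finite_Iio (N + (s - α).toNat + 1)).subset
  intro i hi
  simp only [Set.mem_setOf_eq, betaSet] at hi
  simp only [Set.mem_Iio]
  by_contra hc
  push_neg at hc
  have h0 : p.parts i ≤ p.parts N := p.antitone' (by omega)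
  omega

lemma betaCountGE_eq_ncard (p : Partition') (s α : ℤ) :
    betaCountGE p s α = {i : ℕ | α ≤ betaSet p s i}.ncard :=
  Nat.card_coe_set_eq _

lemma betaCountGE_eq {p : Partition'} {s α : ℤ} {m : ℕ}
    (h1 : ∀ i < m, α ≤ betaSet p s i) (h2 : betaSet p s m < α) :
    betaCountGE p s α = m := by
  rw [betaCountGE_eq_ncard]
  have hset : {i : ℕ | α ≤ betaSet p s i} = Set.Iio m := by
    ext i
    simp only [Set.mem_setOf_eq, Set.mem_Iio]
    constructor
    · intro hi
      by_contra hc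
      push_neg at hc
      exact absurd (le_trans hi (betaSet_antitone p s hc)) (not_le.mpr h2)
    · exact h1 i
  rw [hset]
  simp [Set.ncard_eq_toFinset_card', Set.toFinset_Iio]

lemma le_betaCountGE {p : Partition'} {s α : ℤ} {i : ℕ}
    (h : α ≤ betaSet p s i) : i + 1 ≤ betaCountGE p s α := by
  rw [betaCountGE_eq_ncard]
  have hsub : Set.Iic i ⊆ {j : ℕ | α ≤ betaSet p s j} := by
    intro j hj
    exact le_trans h (betaSet_antitone p s hj)
  calc i + 1 = (Set.Iic i).ncard := by
        simp [Set.ncard_eq_toFinset_card', Set.toFinset_Iic]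
      _ ≤ _ := Set.ncard_le_ncard hsub (setGE_finite p s α)

lemma bddAbove_compSet (l : Bipartition) (σ : ℤ × ℤ) (k : ℕ) :
    BddAbove {z : ℤ | k + 1 ≤ symCountGE l σ z} := by
  refine ⟨max (betaSet l.1 σ.1 0) (betaSet l.2 σ.2 0), fun z hz => ?_⟩
  simp only [Set.mem_setOf_eq] at hz
  by_contra hc
  push_neg at hc
  rw [sup_lt_iff] at hc
  have h1 : betaCountGE l.1 σ.1 z = 0 :=
    betaCountGE_eq (fun i hi => absurd hi (by omega))
      (lt_of_le_of_lt (betaSet_le _ _ _) hc.1)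
  have h2 : betaCountGE l.2 σ.2 z = 0 :=
    betaCountGE_eq (fun i hi => absurd hi (by omega))
      (lt_of_le_of_lt (betaSet_le _ _ _) hc.2)
  simp [symCountGE, h1, h2] at hz

lemma le_comp {l : Bipartition} {σ : ℤ × ℤ} {k : ℕ} {v : ℤ}
    (h : k + 1 ≤ symCountGE l σ v) : v ≤ comp l σ k :=
  le_csSup (bddAbove_compSet l σ k) h

lemma comp_eq {l : Bipartition} {σ : ℤ × ℤ} {k : ℕ} {v : ℤ}
    (h1 : k + 1 ≤ symCountGE l σ v) (h2 : ∀ z, v < z → symCountGE l σ z ≤ k) :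
    comp l σ k = v := by
  refine le_antisymm (csSup_le ⟨v, h1⟩ fun z hz => ?_) (le_comp h1)
  by_contra hc
  push_neg at hc
  exact absurd (h2 z hc) (by simpa using hz)

/-! ### Count formulas -/

lemma c_empty (s α : ℤ) :
    betaCountGE (Partition'.ofMul 0) s α = (s + 1 - α).toNat := by
  apply betaCountGE_eq
  · intro i hi
    simp only [betaSet, parts_zero]
    omega
  · simp only [betaSet, parts_zero]
    omega

lemma c_ones (c : ℕ) (s α : ℤ) :
    betaCountGE (Partition'.ofMul (Multiset.replicate c 1)) s α =
      if 2 + s - c ≤ α then (2 + s - α).toNat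
      else if 1 + s - c ≤ α then c
      else (1 + s - α).toNat := by
  split_ifs with h1 h2
  all_goals
    refine betaCountGE_eq (fun i hi => ?_) ?_ <;>
    · simp only [betaSet, parts_replicate]
      split_ifs <;> omega

lemma c_rect2 (c : ℕ) (s α : ℤ) :
    betaCountGE (Partition'.ofMul (Multiset.replicate c 2)) s α =
      if 3 + s - c ≤ α then (3 + s - α).toNat
      else if 1 + s - c ≤ α then c
      else (1 + s - α).toNat := by
  split_ifs with h1 h2
  all_goals
    refine betaCountGE_eq (fun i hi => ?_) ?_ <;>
    · simp only [betaSet, parts_replicate]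
      split_ifs <;> omega

lemma c_hook2 (c : ℕ) (s α : ℤ) :
    betaCountGE (Partition'.ofMul (hook 2 c)) s α =
      if 3 + s ≤ α then 0
      else if 1 + s - c ≤ α then 1 + (1 + s - α).toNat
      else if s - c ≤ α then c + 1
      else (1 + s - α).toNat := by
  split_ifs with h1 h2 h3
  all_goals
    refine betaCountGE_eq (fun i hi => ?_) ?_ <;>
    · simp only [betaSet, parts_hook 2 c (by norm_num)]
      split_ifs <;> (try exact (by assumption : False).elim) <;> omega

/-! ### Composition closed forms -/

def vmu (n : ℕ) : ℕ → ℤ := fun k =>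
  if k = 0 then 1 else if k ≤ 2*n - 1 then -(((k-1)/2 : ℕ) : ℤ)
  else -(((k+1)/2 : ℕ) : ℤ)

def vW (n : ℕ) : ℕ → ℤ := fun k =>
  if k = 0 then 1 else if k ≤ 4*n - 2 then -((k/2 : ℕ) : ℤ)
  else -(((k+1)/2 : ℕ) : ℤ)

def vW3 (n : ℕ) : ℕ → ℤ := fun k =>
  if k ≤ 4*n then -((k/2 : ℕ) : ℤ) else -(((k+1)/2 : ℕ) : ℤ)

lemma comp_mu (n : ℕ) (hn : 2 ≤ n) (k : ℕ) :
    comp (bip (Multiset.replicate (n-1) 2) 0) (-2, 1) k = vmu n k := by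
  apply comp_eq
  · show k + 1 ≤ betaCountGE (Partition'.ofMul (Multiset.replicate (n-1) 2)) (-2) _
        + betaCountGE (Partition'.ofMul 0) 1 _
    rw [c_rect2, c_empty]
    simp only [vmu]
    split_ifs <;> omega
  · intro z hz
    show betaCountGE (Partition'.ofMul (Multiset.replicate (n-1) 2)) (-2) z
        + betaCountGE (Partition'.ofMul 0) 1 z ≤ k
    rw [c_rect2, c_empty]
    simp only [vmu] at hz
    split_ifs at hz ⊢ <;> omega

lemma comp_W1 (n : ℕ) (hn : 2 ≤ n) (k : ℕ) :
    comp (bip (Multiset.replicate (2*n) 1) 0) (0, -1) k = vW n k := by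
  apply comp_eq
  · show k + 1 ≤ betaCountGE (Partition'.ofMul (Multiset.replicate (2*n) 1)) 0 _
        + betaCountGE (Partition'.ofMul 0) (-1) _
    rw [c_ones, c_empty]
    simp only [vW]
    split_ifs <;> omega
  · intro z hz
    show betaCountGE (Partition'.ofMul (Multiset.replicate (2*n) 1)) 0 z
        + betaCountGE (Partition'.ofMul 0) (-1) z ≤ k
    rw [c_ones, c_empty]
    simp only [vW] at hz
    split_ifs at hz ⊢ <;> omega

lemma comp_W2 (n : ℕ) (hn : 2 ≤ n) (k : ℕ) :
    comp (bip 0 (hook 2 (2*n-2))) (0, -1) k = vW n k := by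
  apply comp_eq
  · show k + 1 ≤ betaCountGE (Partition'.ofMul 0) 0 _
        + betaCountGE (Partition'.ofMul (hook 2 (2*n-2))) (-1) _
    rw [c_hook2, c_empty]
    simp only [vW]
    split_ifs <;> omega
  · intro z hz
    show betaCountGE (Partition'.ofMul 0) 0 z
        + betaCountGE (Partition'.ofMul (hook 2 (2*n-2))) (-1) z ≤ k
    rw [c_hook2, c_empty]
    simp only [vW] at hz
    split_ifs at hz ⊢ <;> omega

lemma comp_W3 (n : ℕ) (hn : 2 ≤ n) (k : ℕ) :
    comp (bip 0 (Multiset.replicate (2*n) 1)) (0, -1) k = vW3 n k := by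
  apply comp_eq
  · show k + 1 ≤ betaCountGE (Partition'.ofMul 0) 0 _
        + betaCountGE (Partition'.ofMul (Multiset.replicate (2*n) 1)) (-1) _
    rw [c_ones, c_empty]
    simp only [vW3]
    split_ifs <;> omega
  · intro z hz
    show betaCountGE (Partition'.ofMul 0) 0 z
        + betaCountGE (Partition'.ofMul (Multiset.replicate (2*n) 1)) (-1) z ≤ k
    rw [c_ones, c_empty]
    simp only [vW3] at hz
    split_ifs at hz ⊢ <;> omega

/-! ### Sum comparison -/

def DW (n : ℕ) : ℕ → ℕ := fun j =>
  if j ≤ 2*n then (j-1)/2 else (n-1) - (j-2*n)/2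

def DW3 (n : ℕ) : ℕ → ℕ := fun j =>
  if j = 0 then 0 else if j ≤ 2*n then 1 + (j-1)/2 else n - (j-2*n)/2

lemma stepW (n : ℕ) (hn : 2 ≤ n) (j : ℕ) :
    vW n j + (DW n (j+1) : ℤ) = vmu n j + DW n j := by
  simp only [vW, vmu, DW]
  split_ifs <;> omega

lemma stepW3 (n : ℕ) (hn : 2 ≤ n) (j : ℕ) :
    vW3 n j + (DW3 n (j+1) : ℤ) = vmu n j + DW3 n j := by
  simp only [vW3, vmu, DW3]
  split_ifs <;> (try exact (by assumption : False).elim) <;> omega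

lemma sumW (n : ℕ) (hn : 2 ≤ n) (j : ℕ) :
    (∑ k ∈ Finset.range j, vW n k) + (DW n j : ℤ) = ∑ k ∈ Finset.range j, vmu n k := by
  induction j with
  | zero => simp [DW]
  | succ j ih =>
    rw [Finset.sum_range_succ, Finset.sum_range_succ]
    have := stepW n hn j
    omega

lemma sumW3 (n : ℕ) (hn : 2 ≤ n) (j : ℕ) :
    (∑ k ∈ Finset.range j, vW3 n k) + (DW3 n j : ℤ) = ∑ k ∈ Finset.range j, vmu n k := by
  induction j with
  | zero => simp [DW3]
  | succ j ih =>
    rw [Finset.sum_range_succ, Finset.sum_range_succ]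
    have := stepW3 n hn j
    omega

/-! ### Dominance for the three winners -/

lemma domLT_W1 (n : ℕ) (hn : 2 ≤ n) :
    DomLT (bip (Multiset.replicate (2*n) 1) 0) (0, -1)
      (bip (Multiset.replicate (n-1) 2) 0) (-2, 1) := by
  constructor
  · intro h
    have h2 := congrFun h 2
    rw [comp_W1 n hn 2, comp_mu n hn 2] at h2
    simp only [vW, vmu] at h2
    split_ifs at h2 <;> (try exact (by assumption : False).elim) <;> omega
  · intro j
    have h1 : ∑ k ∈ Finset.range j, comp (bip (Multiset.replicate (2*n) 1) 0) (0, -1) k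
        = ∑ k ∈ Finset.range j, vW n k :=
      Finset.sum_congr rfl fun k _ => comp_W1 n hn k
    have h2 : ∑ k ∈ Finset.range j, comp (bip (Multiset.replicate (n-1) 2) 0) (-2, 1) k
        = ∑ k ∈ Finset.range j, vmu n k :=
      Finset.sum_congr rfl fun k _ => comp_mu n hn k
    have h3 := sumW n hn j
    omega

lemma domLT_W2 (n : ℕ) (hn : 2 ≤ n) :
    DomLT (bip 0 (hook 2 (2*n-2))) (0, -1)
      (bip (Multiset.replicate (n-1) 2) 0) (-2, 1) := by
  constructor
  · intro h
    have h2 := congrFun h 2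
    rw [comp_W2 n hn 2, comp_mu n hn 2] at h2
    simp only [vW, vmu] at h2
    split_ifs at h2 <;> (try exact (by assumption : False).elim) <;> omega
  · intro j
    have h1 : ∑ k ∈ Finset.range j, comp (bip 0 (hook 2 (2*n-2))) (0, -1) k
        = ∑ k ∈ Finset.range j, vW n k :=
      Finset.sum_congr rfl fun k _ => comp_W2 n hn k
    have h2 : ∑ k ∈ Finset.range j, comp (bip (Multiset.replicate (n-1) 2) 0) (-2, 1) k
        = ∑ k ∈ Finset.range j, vmu n k :=
      Finset.sum_congr rfl fun k _ => comp_mu n hn k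
    have h3 := sumW n hn j
    omega

lemma domLT_W3 (n : ℕ) (hn : 2 ≤ n) :
    DomLT (bip 0 (Multiset.replicate (2*n) 1)) (0, -1)
      (bip (Multiset.replicate (n-1) 2) 0) (-2, 1) := by
  constructor
  · intro h
    have h2 := congrFun h 0
    rw [comp_W3 n hn 0, comp_mu n hn 0] at h2
    simp only [vW3, vmu] at h2
    split_ifs at h2 <;> (try exact (by assumption : False).elim) <;> omega
  · intro j
    have h1 : ∑ k ∈ Finset.range j, comp (bip 0 (Multiset.replicate (2*n) 1)) (0, -1) k
        = ∑ k ∈ Finset.range j, vW3 n k :=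
      Finset.sum_congr rfl fun k _ => comp_W3 n hn k
    have h2 : ∑ k ∈ Finset.range j, comp (bip (Multiset.replicate (n-1) 2) 0) (-2, 1) k
        = ∑ k ∈ Finset.range j, vmu n k :=
      Finset.sum_congr rfl fun k _ => comp_mu n hn k
    have h3 := sumW3 n hn j
    omega

/-! ### Refutations -/

lemma not_domLT_of_top (n : ℕ) (hn : 2 ≤ n) (l : Bipartition) (σ : ℤ × ℤ)
    (hw : 2 ≤ betaSet l.1 σ.1 0 ∨ 2 ≤ betaSet l.2 σ.2 0) :
    ¬ DomLT l σ (bip (Multiset.replicate (n-1) 2) 0) (-2, 1) := by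
  rintro ⟨-, hle⟩
  have h1 := hle 1
  rw [Finset.sum_range_one, Finset.sum_range_one, comp_mu n hn 0] at h1
  have h2 : (2:ℤ) ≤ comp l σ 0 := by
    apply le_comp
    show 0 + 1 ≤ betaCountGE l.1 σ.1 2 + betaCountGE l.2 σ.2 2
    rcases hw with hw | hw
    · have := le_betaCountGE hw
      omega
    · have := le_betaCountGE hw
      omega
  have h3 : vmu n 0 = 1 := by simp [vmu]
  omega

lemma not_domLT_A1 (n : ℕ) (hn : 2 ≤ n) :
    ¬ DomLT (bip (Multiset.replicate n 1) (hook 2 (n-2))) (0, -1)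
      (bip (Multiset.replicate (n-1) 2) 0) (-2, 1) := by
  rintro ⟨-, hle⟩
  have h2 := hle 2
  rw [Finset.sum_range_succ, Finset.sum_range_succ, Finset.sum_range_zero,
      Finset.sum_range_succ, Finset.sum_range_succ, Finset.sum_range_zero,
      comp_mu n hn 0, comp_mu n hn 1] at h2
  have hb1 : (1:ℤ) ≤ betaSet (Partition'.ofMul (Multiset.replicate n 1)) 0 0 := by
    simp only [betaSet, parts_replicate]
    split_ifs <;> omega
  have hb2 : (1:ℤ) ≤ betaSet (Partition'.ofMul (hook 2 (n-2))) (-1) 0 := by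
    simp only [betaSet, parts_hook 2 (n-2) (by norm_num)]
    split_ifs <;> omega
  have hc1 := le_betaCountGE hb1
  have hc2 := le_betaCountGE hb2
  have hk0 : (1:ℤ) ≤ comp (bip (Multiset.replicate n 1) (hook 2 (n-2))) (0, -1) 0 := by
    apply le_comp
    show 0 + 1 ≤ betaCountGE (Partition'.ofMul (Multiset.replicate n 1)) 0 1
        + betaCountGE (Partition'.ofMul (hook 2 (n-2))) (-1) 1
    omega
  have hk1 : (1:ℤ) ≤ comp (bip (Multiset.replicate n 1) (hook 2 (n-2))) (0, -1) 1 := by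
    apply le_comp
    show 1 + 1 ≤ betaCountGE (Partition'.ofMul (Multiset.replicate n 1)) 0 1
        + betaCountGE (Partition'.ofMul (hook 2 (n-2))) (-1) 1
    omega
  have hv0 : vmu n 0 = 1 := by simp [vmu]
  have hv1 : vmu n 1 = 0 := by
    simp only [vmu]
    split_ifs <;> (try exact (by assumption : False).elim) <;> omega
  omega

lemma comp_A2_eq (n : ℕ) (hn : 2 ≤ n) :
    comp (bip (Multiset.replicate (n+1) 1) (Multiset.replicate (n-1) 1)) (0, -1)
      = comp (bip (Multiset.replicate (n-1) 2) 0) (-2, 1) := by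
  have hF : ∀ z : ℤ,
      symCountGE (bip (Multiset.replicate (n+1) 1) (Multiset.replicate (n-1) 1)) (0, -1) z
      = symCountGE (bip (Multiset.replicate (n-1) 2) 0) (-2, 1) z := by
    intro z
    show betaCountGE (Partition'.ofMul (Multiset.replicate (n+1) 1)) 0 z
        + betaCountGE (Partition'.ofMul (Multiset.replicate (n-1) 1)) (-1) z
        = betaCountGE (Partition'.ofMul (Multiset.replicate (n-1) 2)) (-2) z
        + betaCountGE (Partition'.ofMul 0) 1 z
    rw [c_ones, c_ones, c_rect2, c_empty]
    split_ifs <;> omega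
  funext k
  simp only [comp, hF]

/-! ### Identification helpers -/

lemma hook_one (b : ℕ) : hook 1 b = Multiset.replicate (b+1) 1 := by
  rw [hook, Multiset.replicate_succ]

lemma bip_ne_fst {a a' b b' : Multiset ℕ}
    (h : (Partition'.ofMul a).parts 0 ≠ (Partition'.ofMul a').parts 0) :
    bip a b ≠ bip a' b' :=
  fun he => h (congrArg (fun x => x.1.parts 0) he)

lemma bip_ne_snd {a a' b b' : Multiset ℕ}
    (h : (Partition'.ofMul b).parts 0 ≠ (Partition'.ofMul b').parts 0) :
    bip a b ≠ bip a' b' :=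
  fun he => h (congrArg (fun x => x.2.parts 0) he)

lemma ofMul_pair_zero : Partition'.ofMul ({0, 0} : Multiset ℕ) = Partition'.ofMul 0 := by
  apply Partition'.ext'
  funext k
  rw [parts_pair 0 0 le_rfl, parts_zero]
  split_ifs <;> rfl

end Aux19

end Aux19

/-- Among the block symbols (charge `σ₀` on `PS(n)`, charge `σ₁` on
`L_{B₂}(n)`, charge `σ₂` on `L_{B₆}(n)`), those strictly dominated by the symbol of
`2^{n-1}.∅` of charge `σ₁` are exactly the symbols of charge `σ₀` of the bipartitions
`1^{2n}.∅`, `∅.21^{2n-2}` and `∅.1^{2n}`. -/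
theorem decomposition_numbers_stmt19 (n : ℕ) (hn : 2 ≤ n) (t : ℕ) (l : Bipartition)
    (h : (t = 0 ∧ l ∈ PS n) ∨ (t = 1 ∧ l ∈ LB2 n) ∨ (t = 2 ∧ l ∈ LB6 n)) :
    DomLT l (sigmaT t) (bip (Multiset.replicate (n - 1) 2) 0) (sigmaT 1) ↔
      (t = 0 ∧ (l = bip (Multiset.replicate (2 * n) 1) 0 ∨
                l = bip 0 (hook 2 (2 * n - 2)) ∨
                l = bip 0 (Multiset.replicate (2 * n) 1))) := by
  have hσ1 : sigmaT 1 = ((-2 : ℤ), (1 : ℤ)) := by norm_num [sigmaT]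
  have hσ0 : sigmaT 0 = ((0 : ℤ), (-1 : ℤ)) := by norm_num [sigmaT]
  have hσ2 : sigmaT 2 = ((2 : ℤ), (-3 : ℤ)) := by norm_num [sigmaT]
  rw [hσ1]
  rcases h with ⟨ht, hl⟩ | ⟨ht, hl⟩ | ⟨ht, hl⟩
  · -- t = 0 : principal series
    subst ht
    rw [hσ0]
    rcases hl with ⟨i, j, hi0, hin, hjn, rfl⟩ | ⟨j, hj, rfl⟩ | ⟨i, hi0, hi2n, rfl⟩
    · -- family A : never dominated, never a winner
      constructor
      · intro hd
        exfalso
        rcases (by omega : i ≤ n-2 ∨ j ≤ n-2 ∨ (i = n-1 ∧ j = n-1) ∨ (i = n-1 ∧ j = n))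
          with hc | hc | ⟨rfl, rfl⟩ | ⟨rfl, hc⟩
        · refine Aux19.not_domLT_of_top n hn _ _ (Or.inl ?_) hd
          show (2:ℤ) ≤ betaSet (Partition'.ofMul (hook (n-i) j)) 0 0
          simp only [betaSet]
          rw [Aux19.parts_hook _ _ (by omega)]
          split_ifs <;> omega
        · refine Aux19.not_domLT_of_top n hn _ _ (Or.inr ?_) hd
          show (2:ℤ) ≤ betaSet (Partition'.ofMul (hook (n-j+1) (i-1))) (-1) 0
          simp only [betaSet]
          rw [Aux19.parts_hook _ _ (by omega)]
          split_ifs <;> omega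
        · rw [(by omega : n-(n-1)+1 = 2), (by omega : n-(n-1) = 1),
              (by omega : n-1-1 = n-2), Aux19.hook_one,
              (by omega : n-1+1 = n)] at hd
          exact Aux19.not_domLT_A1 n hn hd
        · rw [hc] at hd
          rw [(by omega : n-(n-1) = 1), (by omega : n-n+1 = 1),
              (by omega : n-1-1 = n-2)] at hd
          simp only [Aux19.hook_one] at hd
          rw [(by omega : n-2+1 = n-1)] at hd
          exact hd.1 (Aux19.comp_A2_eq n hn)
      · rintro ⟨-, he | he | he⟩
        · exact absurd he (Aux19.bip_ne_snd (by
            rw [Aux19.parts_hook _ _ (by omega), Aux19.parts_zero]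
            split_ifs <;> omega))
        · exact absurd he (Aux19.bip_ne_fst (by
            rw [Aux19.parts_hook _ _ (by omega), Aux19.parts_zero]
            split_ifs <;> omega))
        · exact absurd he (Aux19.bip_ne_fst (by
            rw [Aux19.parts_hook _ _ (by omega), Aux19.parts_zero]
            split_ifs <;> omega))
    · -- family B
      rcases (by omega : j ≤ 2*n-2 ∨ j = 2*n-1) with hc | rfl
      · constructor
        · intro hd
          exfalso
          refine Aux19.not_domLT_of_top n hn _ _ (Or.inl ?_) hd
          show (2:ℤ) ≤ betaSet (Partition'.ofMul (hook (2*n-j) j)) 0 0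
          simp only [betaSet]
          rw [Aux19.parts_hook _ _ (by omega)]
          split_ifs <;> omega
        · rintro ⟨-, he | he | he⟩
          · exact absurd he (Aux19.bip_ne_fst (by
              rw [Aux19.parts_hook _ _ (by omega), Aux19.parts_replicate]
              split_ifs <;> omega))
          · exact absurd he (Aux19.bip_ne_snd (by
              rw [Aux19.parts_zero, Aux19.parts_hook _ _ (by norm_num)]
              split_ifs <;> omega))
          · exact absurd he (Aux19.bip_ne_snd (by
              rw [Aux19.parts_zero, Aux19.parts_replicate]
              split_ifs <;> omega))
      · rw [(by omega : 2*n-(2*n-1) = 1), Aux19.hook_one, (by omega : 2*n-1+1 = 2*n)]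
        exact ⟨fun _ => ⟨rfl, Or.inl rfl⟩, fun _ => Aux19.domLT_W1 n hn⟩
    · -- family C
      rcases (by omega : i ≤ 2*n-2 ∨ i = 2*n-1 ∨ i = 2*n) with hc | rfl | rfl
      · constructor
        · intro hd
          exfalso
          refine Aux19.not_domLT_of_top n hn _ _ (Or.inr ?_) hd
          show (2:ℤ) ≤ betaSet (Partition'.ofMul (hook (2*n-i+1) (i-1))) (-1) 0
          simp only [betaSet]
          rw [Aux19.parts_hook _ _ (by omega)]
          split_ifs <;> omega
        · rintro ⟨-, he | he | he⟩
          · exact absurd he (Aux19.bip_ne_fst (by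
              rw [Aux19.parts_zero, Aux19.parts_replicate]
              split_ifs <;> omega))
          · exact absurd he (Aux19.bip_ne_snd (by
              rw [Aux19.parts_hook _ _ (by omega), Aux19.parts_hook _ _ (by norm_num)]
              split_ifs <;> omega))
          · exact absurd he (Aux19.bip_ne_snd (by
              rw [Aux19.parts_hook _ _ (by omega), Aux19.parts_replicate]
              split_ifs <;> omega))
      · rw [(by omega : 2*n-(2*n-1)+1 = 2), (by omega : 2*n-1-1 = 2*n-2)]
        exact ⟨fun _ => ⟨rfl, Or.inr (Or.inl rfl)⟩, fun _ => Aux19.domLT_W2 n hn⟩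
      · rw [(by omega : 2*n-(2*n)+1 = 1), Aux19.hook_one, (by omega : 2*n-1+1 = 2*n)]
        exact ⟨fun _ => ⟨rfl, Or.inr (Or.inr rfl)⟩, fun _ => Aux19.domLT_W3 n hn⟩
  · -- t = 1 : B₂ series
    subst ht
    rw [hσ1]
    constructor
    · intro hd
      exfalso
      obtain ⟨i, j, hij, hjn, rfl⟩ := hl
      rcases (by omega : i ≤ n-2 ∨ (i = n-1 ∧ j = n)) with hc | ⟨rfl, hc⟩
      · refine Aux19.not_domLT_of_top n hn _ _ (Or.inr ?_) hd
        show (2:ℤ) ≤ betaSet (Partition'.ofMul ({n-i-1, n-j} : Multiset ℕ)) 1 0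
        simp only [betaSet]
        rw [Aux19.parts_pair _ _ (by omega)]
        split_ifs <;> omega
      · rw [hc] at hd
        rw [(by omega : n-(n-1)-1 = 0), (by omega : n-n = 0),
            Multiset.replicate_zero, add_zero] at hd
        have heq : bip (Multiset.replicate (n-1) 2) ({0, 0} : Multiset ℕ)
            = bip (Multiset.replicate (n-1) 2) 0 := by
          unfold bip
          rw [Aux19.ofMul_pair_zero]
        rw [heq] at hd
        exact hd.1 rfl
    · rintro ⟨h, -⟩
      exact absurd h one_ne_zero
  · -- t = 2 : B₆ series
    subst ht
    rw [hσ2]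
    constructor
    · intro hd
      exfalso
      obtain ⟨i, j, hi0, hij, hjn, rfl⟩ := hl
      refine Aux19.not_domLT_of_top n hn _ _ (Or.inl ?_) hd
      show (2:ℤ) ≤ betaSet (Partition'.ofMul ({n-i-2, n-j-1} : Multiset ℕ)) 2 0
      simp only [betaSet]
      rw [Aux19.parts_pair _ _ (by omega)]
      split_ifs <;> omega
    · rintro ⟨h, -⟩
      exact absurd h (by omega)
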